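/- Let p be a prime, let A be a θ^p-ring, let e ≥ 1, and let a ∈ A satisfy p^e·a = 0. Then for every k with 0 ≤ k ≤ e−1 one has a^{p^e+p^{e−1}} = ψ^{p^k}(a^{p^{e−k}+p^{e−k−1}}). -/

import Mathlib

/-- A `θ^p`-ring: a commutative ring `A` equipped with maps `θ ψ : A → A` such that
`ψ` is a ring homomorphism, `ψ a = a^p - p * θ a`, and `θ` satisfies the usual
identities of a `p`-typical `δ`-structure. -/
structure IsThetaRing (p : ℕ) {A : Type*} [CommRing A] (θ ψ : A → A) : Prop where
  psi_one : ψ 1 = 1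
  psi_add : ∀ a b : A, ψ (a + b) = ψ a + ψ b
  psi_mul : ∀ a b : A, ψ (a * b) = ψ a * ψ b
  psi_def : ∀ a : A, ψ a = a ^ p - (p : A) * θ a
  theta_one : θ 1 = 0
  theta_add : ∀ a b : A, θ (a + b) = θ a + θ b +
    ∑ j ∈ Finset.Ioo 0 p, ((p.choose j / p : ℕ) : A) * a ^ j * b ^ (p - j)
  theta_mul : ∀ a b : A, θ (a * b) = θ a * ψ b + a ^ p * θ b
  theta_psi : ∀ a : A, θ (ψ a) = ψ (θ a)

section ThetaAux

/-- Binomial expansion of `(n+1)^p` isolating the middle binomial coefficients. -/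
theorem ThetaAux.nat_key (p : ℕ) (hp : p.Prime) (n : ℕ) :
    (n+1)^p = p * (∑ j ∈ Finset.Ioo 0 p, (p.choose j / p) * n ^ j) + n^p + 1 := by
  have hp0 : 0 < p := hp.pos
  have h1 : (n+1)^p = ∑ k ∈ Finset.range (p+1), n^k * 1^(p-k) * (p.choose k) := add_pow n 1 p
  simp only [one_pow, mul_one] at h1
  rw [Finset.sum_range_succ, Nat.choose_self, mul_one] at h1
  have h2 : Finset.range p = insert 0 (Finset.Ioo 0 p) := by
    ext k; simp only [Finset.mem_range, Finset.mem_insert, Finset.mem_Ioo]; omega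
  rw [h2, Finset.sum_insert (by simp)] at h1
  simp only [pow_zero, Nat.choose_zero_right, one_mul] at h1
  have h3 : p * (∑ j ∈ Finset.Ioo 0 p, (p.choose j / p) * n ^ j)
      = ∑ j ∈ Finset.Ioo 0 p, n ^ j * p.choose j := by
    rw [Finset.mul_sum]
    refine Finset.sum_congr rfl fun j hj => ?_
    rw [Finset.mem_Ioo] at hj
    rw [show p * (p.choose j / p * n ^ j) = p * (p.choose j / p) * n ^ j from by ring,
      Nat.mul_div_cancel' (hp.dvd_choose_self (by omega) hj.2), mul_comm]
  rw [h1, h3]; ring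

/-- Fermat: `p ∣ n^p - n`. -/
theorem ThetaAux.nat_dvd (p : ℕ) (hp : p.Prime) (n : ℕ) : p ∣ n^p - n := by
  induction n with
  | zero => simp [zero_pow hp.pos.ne']
  | succ n ih =>
    obtain ⟨q, hq⟩ := ih
    have hk := ThetaAux.nat_key p hp n
    have hle : n ≤ n ^ p := Nat.le_self_pow hp.pos.ne' n
    refine ⟨(∑ j ∈ Finset.Ioo 0 p, (p.choose j / p) * n ^ j) + q, ?_⟩
    have hdist : p * ((∑ j ∈ Finset.Ioo 0 p, (p.choose j / p) * n ^ j) + q)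
        = p * (∑ j ∈ Finset.Ioo 0 p, (p.choose j / p) * n ^ j) + p * q := by ring
    omega

theorem ThetaAux.nat_div (p : ℕ) (hp : p.Prime) (n : ℕ) :
    ((n+1)^p - (n+1))/p = (n^p - n)/p + ∑ j ∈ Finset.Ioo 0 p, (p.choose j / p) * n ^ j := by
  obtain ⟨q, hq⟩ := ThetaAux.nat_dvd p hp n
  have hk := ThetaAux.nat_key p hp n
  have hle : n ≤ n ^ p := Nat.le_self_pow hp.pos.ne' n
  have h1 : (n+1)^p - (n+1) = p * (q + ∑ j ∈ Finset.Ioo 0 p, (p.choose j / p) * n ^ j) := by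
    have hdist : p * (q + ∑ j ∈ Finset.Ioo 0 p, (p.choose j / p) * n ^ j)
        = p * q + p * ∑ j ∈ Finset.Ioo 0 p, (p.choose j / p) * n ^ j := by ring
    omega
  rw [h1, hq, Nat.mul_div_cancel_left _ hp.pos, Nat.mul_div_cancel_left _ hp.pos]

/-- Valuation estimate: if `p^v ∣ M` and `j ≥ 1` then `p^(v+1) ∣ p^j * C(M,j)`. -/
theorem ThetaAux.dvd_pow_mul_choose (p : ℕ) (hp : p.Prime) {M v j : ℕ}
    (hM : p ^ v ∣ M) (hj : 1 ≤ j) :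
    p ^ (v+1) ∣ p ^ j * M.choose j := by
  rcases le_or_gt (v+1) j with hc | hc
  · exact dvd_mul_of_dvd_left (pow_dvd_pow p hc) _
  · rcases Nat.eq_zero_or_pos M with rfl | hM0
    · simp [Nat.choose_eq_zero_of_lt hj]
    · set w := j.factorization p with hw
      have hw_dvd : p ^ w ∣ j := Nat.ordProj_dvd j p
      have hwj : p ^ w ≤ j := Nat.le_of_dvd hj hw_dvd
      have hwlt : w < p ^ w := Nat.lt_pow_self hp.one_lt (n := w)
      have hu : ¬ p ∣ j / p ^ w := Nat.not_dvd_ordCompl hp (by omega)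
      have hju : p ^ w * (j / p ^ w) = j := Nat.ordProj_mul_ordCompl_eq_self j p
      have hMC : p ^ v ∣ M.choose j * j := by
        have h1 : M * (M-1).choose (j-1) = M.choose j * j := by
          have := Nat.add_one_mul_choose_eq (M-1) (j-1)
          rwa [Nat.sub_add_cancel hM0, Nat.sub_add_cancel hj] at this
        exact h1 ▸ hM.mul_right _
      have hvw : w + 1 ≤ v := by omega
      have hcop : Nat.Coprime (p ^ (v - w)) (j / p ^ w) :=
        Nat.Coprime.pow_left _ ((Nat.Prime.coprime_iff_not_dvd hp).mpr hu)
      have hC : p ^ (v - w) ∣ M.choose j := by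
        have h2 : p ^ w * p ^ (v - w) ∣ p ^ w * ((j / p ^ w) * M.choose j) := by
          rw [← pow_add]
          have hww : w + (v - w) = v := by omega
          rw [hww, show p ^ w * (j / p ^ w * M.choose j) = M.choose j * j from by
            rw [← mul_assoc, hju]; ring]
          exact hMC
        have h3 : p ^ (v - w) ∣ (j / p ^ w) * M.choose j :=
          (mul_dvd_mul_iff_left (pow_ne_zero w hp.pos.ne')).mp h2
        exact hcop.dvd_of_dvd_mul_left h3
      have h4 : p ^ (v + 1) ∣ p ^ j * p ^ (v - w) := by
        rw [← pow_add]
        exact pow_dvd_pow p (by omega)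
      exact h4.trans (mul_dvd_mul_left _ hC)

variable {p : ℕ} {A : Type*} [CommRing A] {θ ψ : A → A}

theorem ThetaAux.theta_zero (h : IsThetaRing p θ ψ) : θ (0:A) = 0 := by
  have e := h.theta_add 0 0
  have hs : ∑ j ∈ Finset.Ioo 0 p, ((p.choose j / p : ℕ):A) * (0:A)^j * (0:A)^(p-j) = 0 :=
    Finset.sum_eq_zero (fun j hj => by
      rw [Finset.mem_Ioo] at hj
      rw [zero_pow (by omega : j ≠ 0), mul_zero, zero_mul])
  rw [add_zero, hs, add_zero] at e
  linear_combination (-1 : A) * e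

theorem ThetaAux.psi_pow (h : IsThetaRing p θ ψ) (x : A) (n : ℕ) : ψ (x^n) = (ψ x)^n := by
  induction n with
  | zero => simpa using h.psi_one
  | succ n ih => rw [pow_succ, h.psi_mul, ih, pow_succ]

theorem ThetaAux.iter_pow (h : IsThetaRing p θ ψ) (x : A) (n k : ℕ) :
    ψ^[k] (x^n) = (ψ^[k] x)^n := by
  induction k with
  | zero => rfl
  | succ k ih =>
    rw [Function.iterate_succ_apply', ih, ThetaAux.psi_pow h, Function.iterate_succ_apply']

theorem ThetaAux.theta_natCast (hp : p.Prime) (h : IsThetaRing p θ ψ) (n : ℕ) :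
    θ ((n : ℕ) : A) = (((n ^ p - n) / p : ℕ) : A) := by
  induction n with
  | zero => simpa [zero_pow hp.pos.ne'] using ThetaAux.theta_zero h
  | succ n ih =>
    rw [Nat.cast_add, Nat.cast_one, h.theta_add, h.theta_one, ih, ThetaAux.nat_div p hp n]
    push_cast
    simp only [one_pow, mul_one]
    ring

/-- If `p^(f+1) * b = 0` then `p^f * ψ b = 0`. -/
theorem ThetaAux.psi_tors (hp : p.Prime) (h : IsThetaRing p θ ψ) (f : ℕ) (b : A)
    (hb : (p:A)^(f+1) * b = 0) : (p:A)^f * ψ b = 0 := by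
  have hp2 := hp.two_le
  obtain ⟨q, rfl⟩ : ∃ q, p = q + 2 := ⟨p - 2, by omega⟩
  have hθp : θ (((q+2:ℕ):A)^(f+1))
      = ((q+2:ℕ):A)^(f*q+2*f+q+1) - ((q+2:ℕ):A)^f := by
    rw [← Nat.cast_pow, ThetaAux.theta_natCast hp h]
    have ha : ((q+2)^(f+1))^(q+2) = (q+2) * (q+2)^(f*q+2*f+q+1) := by
      rw [← pow_mul, show (f+1)*(q+2) = (f*q+2*f+q+1)+1 from by ring, pow_succ']
    have hb' : (q+2)^(f+1) = (q+2) * (q+2)^f := pow_succ' _ _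
    rw [ha, hb', ← Nat.mul_sub, Nat.mul_div_cancel_left _ (by omega : 0 < q+2)]
    have hle : (q+2)^f ≤ (q+2)^(f*q+2*f+q+1) :=
      Nat.pow_le_pow_right (by omega) (by nlinarith)
    rw [Nat.cast_sub hle, Nat.cast_pow, Nat.cast_pow]
  have e0 : θ (((q+2:ℕ):A)^(f+1) * b) = 0 := by rw [hb]; exact ThetaAux.theta_zero h
  rw [h.theta_mul, hθp] at e0
  have hψ := h.psi_def b
  have hX1 : ((q+2:ℕ):A)^(f*q+2*f+q+1)
      = ((q+2:ℕ):A)^(f*q+f+q) * ((q+2:ℕ):A)^f * ((q+2:ℕ):A) := by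
    rw [mul_assoc, ← pow_succ, ← pow_add]; congr 1; ring
  have hX2 : (((q+2:ℕ):A)^(f+1))^(q+2)
      = ((q+2:ℕ):A)^(f*q+f+q) * ((q+2:ℕ):A)^f * ((q+2:ℕ):A) * ((q+2:ℕ):A) := by
    have e1 : (((q+2:ℕ):A)^(f+1))^(q+2) = ((q+2:ℕ):A)^((f*q+f+q)+f+1+1) := by
      rw [← pow_mul]; congr 1; ring
    rw [e1, pow_succ, pow_succ, pow_add]
  have hb' : ((q+2:ℕ):A)^f * ((q+2:ℕ):A) * b = 0 := by
    rw [← pow_succ]; exact hb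
  rw [hX1, hX2] at e0
  generalize ((q+2:ℕ):A)^(f*q+f+q) = Y at e0
  linear_combination (-1 : A) * e0 + (Y * ((q+2:ℕ):A)^f * ((q+2:ℕ):A)) * hψ
    + (Y * b^(q+1)) * hb'

/-- The key step: if `p^(f+2) * b = 0` then `ψ (b^(p^(f+1)+p^f)) = b^(p^(f+2)+p^(f+1))`. -/
theorem ThetaAux.psi_step (hp : p.Prime) (h : IsThetaRing p θ ψ) (f : ℕ) (b : A)
    (hb : (p:A)^(f+2) * b = 0) :
    ψ (b ^ (p^(f+1) + p^f)) = b ^ (p^(f+2) + p^(f+1)) := by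
  have hp2 := hp.two_le
  obtain ⟨q, rfl⟩ : ∃ q, p = q + 2 := ⟨p - 2, by omega⟩
  set m := (q+2)^(f+1) + (q+2)^f with hm
  have hmf : f + 3 ≤ m := by
    have h1 : f + 2 ≤ 2^(f+1) := Nat.lt_two_pow_self (n := f+1)
    have h2 : (2:ℕ)^(f+1) ≤ (q+2)^(f+1) := Nat.pow_le_pow_left (by omega) _
    have h3 : 1 ≤ (q+2)^f := Nat.one_le_pow _ _ (by omega)
    omega
  have hψt : ((q+2:ℕ):A)^(f+1) * ψ b = 0 := ThetaAux.psi_tors hp h (f+1) b hb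
  have hψ := h.psi_def b
  have hD : ((q+2:ℕ):A)^(f+2) * θ b = ((q+2:ℕ):A)^(f+1) * b^(q+2) := by
    linear_combination (-1:A) * hψt + ((q+2:ℕ):A)^(f+1) * hψ
  have hF2 : ((q+2:ℕ):A)^(f+2) * θ b * b^(q+2) = 0 := by
    linear_combination (θ b * b^(q+1)) * hb
  have hE : ((q+2:ℕ):A)^(f+1) * b^(q+3) = 0 := by
    linear_combination (θ b) * hb - b * hD
  have hG : ((q+2:ℕ):A)^(f+3) * θ b = 0 := by
    linear_combination ((q+2:ℕ):A) * hD + b^(q+1) * hb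
  have hz : ∀ i j : ℕ, i + j = m → 1 ≤ j →
      (((q+2:ℕ):A) * θ b)^j * (b^(q+2))^i * (m.choose i : A) = 0 := by
    intro i j hij hj
    rcases le_or_gt (f+3) j with hc1 | hc1
    · obtain ⟨d, rfl⟩ : ∃ d, j = f + 3 + d := ⟨j - (f+3), by omega⟩
      rw [mul_pow]
      linear_combination (((q+2:ℕ):A)^d * θ b ^(f+2+d) * (b^(q+2))^i * (m.choose i : A)) * hG
    · rcases le_or_gt (f+2) j with hc2 | hc2
      · have hj2 : j = f + 2 := by omega
        subst hj2
        obtain ⟨i', rfl⟩ : ∃ i', i = i' + 1 := ⟨i - 1, by omega⟩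
        rw [mul_pow]
        linear_combination (θ b^(f+1) * (b^(q+2))^i' * (m.choose (i'+1) : A)) * hF2
      · obtain ⟨i', rfl⟩ : ∃ i', i = i' + 2 := ⟨i - 2, by omega⟩
        have hMdvd : (q+2)^f ∣ m := ⟨(q+2) + 1, by rw [hm]; ring⟩
        have hdvd : (q+2)^(f+1) ∣ (q+2)^j * m.choose j :=
          ThetaAux.dvd_pow_mul_choose (q+2) hp hMdvd hj
        have hsymm : m.choose (i'+2) = m.choose j := by
          rw [← Nat.choose_symm (show j ≤ m by omega)]
          congr 1; omega
        obtain ⟨c, hc⟩ := hdvd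
        have hcA : ((q+2:ℕ):A)^j * (m.choose j : A) = ((q+2:ℕ):A)^(f+1) * (c:A) := by
          rw [← Nat.cast_pow, ← Nat.cast_mul, ← Nat.cast_pow, ← Nat.cast_mul, hc]
        rw [mul_pow, hsymm]
        linear_combination (θ b ^ j * (b^(q+2))^(i'+2)) * hcA
          + ((c:A) * θ b ^ j * (b^(q+2))^i' * b^(q+1)) * hE
  have hsum : ψ (b ^ m) = b ^ ((q+2)^(f+2) + (q+2)^(f+1)) := by
    rw [ThetaAux.psi_pow h, hψ, sub_eq_add_neg, add_pow, Finset.sum_range_succ]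
    rw [Finset.sum_eq_zero (fun i hi => ?_)]
    · simp only [Nat.sub_self, pow_zero, mul_one, Nat.choose_self, Nat.cast_one, zero_add]
      rw [← pow_mul]
      congr 1
      rw [hm]; ring
    · rw [Finset.mem_range] at hi
      rw [neg_pow]
      rw [show (b^(q+2))^i * ((-1:A)^(m-i) * (((q+2:ℕ):A) * θ b)^(m-i)) * (m.choose i : A)
          = (-1:A)^(m-i) * ((((q+2:ℕ):A) * θ b)^(m-i) * (b^(q+2))^i * (m.choose i : A)) from by
            ring,
        hz i (m-i) (by omega) (by omega), mul_zero]
  exact hsum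

/-- Iterated torsion: `p^(e-k) * ψ^[k] a = 0`. -/
theorem ThetaAux.iter_tors (hp : p.Prime) (h : IsThetaRing p θ ψ) (e : ℕ) (a : A)
    (ha : (p:A)^e * a = 0) : ∀ k : ℕ, k + 1 ≤ e → (p:A)^(e-k) * ψ^[k] a = 0 := by
  intro k
  induction k with
  | zero => intro _; simpa using ha
  | succ k ih =>
    intro hk
    have h0 := ih (by omega)
    have h1 : (p:A)^(e-(k+1)+1) * ψ^[k] a = 0 := by
      rw [show e-(k+1)+1 = e-k from by omega]; exact h0
    have h2 := ThetaAux.psi_tors hp h (e-(k+1)) (ψ^[k] a) h1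
    rw [Function.iterate_succ_apply']
    exact h2

end ThetaAux

/-- If `p^e · a = 0` then `a^{p^e + p^{e-1}} = ψ^{p^k}(a^{p^{e-k} + p^{e-k-1}})`
for `0 ≤ k ≤ e - 1`. Here `ψ^{p^k}` is the `k`-fold iterate `ψ^[k]`. -/
theorem pow_eq_psi_iterate_pow (p : ℕ) (hp : p.Prime) (A : Type*) [CommRing A]
    (θ ψ : A → A) (h : IsThetaRing p θ ψ) (e : ℕ) (he : 1 ≤ e) (a : A)
    (ha : (p : A) ^ e * a = 0) :
    ∀ k : ℕ, k ≤ e - 1 →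
      a ^ (p ^ e + p ^ (e - 1)) = ψ^[k] (a ^ (p ^ (e - k) + p ^ (e - k - 1))) := by
  intro k
  induction k with
  | zero => intro _; simp
  | succ k ih =>
    intro hk
    have h1 := ih (by omega)
    obtain ⟨f, hf⟩ : ∃ f, e - k = f + 2 := ⟨e - k - 2, by omega⟩
    have htors : (p:A)^(f+2) * ψ^[k] a = 0 := by
      have := ThetaAux.iter_tors hp h e a ha k (by omega)
      rwa [hf] at this
    rw [show e - k - 1 = f + 1 from by omega, hf, ThetaAux.iter_pow h] at h1
    have h2 := ThetaAux.psi_step hp h f (ψ^[k] a) htors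
    rw [show e - (k+1) - 1 = f from by omega, show e - (k+1) = f + 1 from by omega,
      Function.iterate_succ_apply', ThetaAux.iter_pow h, h2]
    exact h1
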